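/- Let K be a commutative associative unital ring and let a, b be invertible elements of K. The generalized quaternion algebra ℍ[K,a,b] is non-commutative and centrally essential if and only if the ideal Ann_K(2) = {x ∈ K : 2x = 0} is an essential ideal of K and Ann_K(2) ≠ K. -/

import Mathlib

set_option linter.unusedSectionVars false

/-- The associator `(a,b,c) = (ab)c - a(bc)` in a not necessarily associative ring. -/
def naAssociator {R : Type*} [NonAssocRing R] (a b c : R) : R := a * b * c - a * (b * c)

/-- The commutator `[a,b] = ab - ba` in a not necessarily associative ring. -/
def naCommutator {R : Type*} [NonAssocRing R] (a b : R) : R := a * b - b * a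

/-- The associative center `N(R)`. -/
def assocCenter (R : Type*) [NonAssocRing R] : Set R :=
  {x | ∀ a b : R, naAssociator x a b = 0 ∧ naAssociator a x b = 0 ∧ naAssociator a b x = 0}

/-- The commutative center `K(R)`. -/
def commCenter (R : Type*) [NonAssocRing R] : Set R :=
  {x | ∀ a : R, naCommutator x a = 0}

/-- The center `Z(R) = N(R) ∩ K(R)`. -/
def ringCenter (R : Type*) [NonAssocRing R] : Set R :=
  assocCenter R ∩ commCenter R

/-- A ring is centrally essential if for every nonzero `r` there is a central `z`
with `z * r ≠ 0` central. -/
def IsCentrallyEssential (R : Type*) [NonAssocRing R] : Prop :=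
  ∀ r : R, r ≠ 0 → ∃ z ∈ ringCenter R, z * r ≠ 0 ∧ z * r ∈ ringCenter R

/-- A ring is left `N`-essential. -/
def IsLeftNEssential (R : Type*) [NonAssocRing R] : Prop :=
  ∀ r : R, r ≠ 0 → ∃ n ∈ assocCenter R, n * r ≠ 0 ∧ n * r ∈ assocCenter R

/-- A ring is right `N`-essential. -/
def IsRightNEssential (R : Type*) [NonAssocRing R] : Prop :=
  ∀ r : R, r ≠ 0 → ∃ n ∈ assocCenter R, r * n ≠ 0 ∧ r * n ∈ assocCenter R

/-- `I` is an essential ideal of `B` (elementwise formulation). -/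
def EssentialIn {R : Type*} [NonAssocRing R] (I B : Set R) : Prop :=
  ∀ b ∈ B, b ≠ 0 → ∃ d ∈ B, d * b ≠ 0 ∧ d * b ∈ I

/-- The Cayley–Dickson ring `(A, α)`: the abelian group `A ⊕ A` with multiplication
`(a₁,a₂)(a₃,a₄) = (a₁a₃ + α(a₄a₂*), a₁*a₄ + a₃a₂)`. -/
@[ext]
structure CD (A : Type*) (α : A) : Type _ where
  re : A
  im : A

namespace CD

variable {A : Type*} [NonAssocRing A] [StarRing A] {α : A}

instance : Zero (CD A α) := ⟨⟨0, 0⟩⟩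
instance : Add (CD A α) := ⟨fun z w => ⟨z.re + w.re, z.im + w.im⟩⟩
instance : Neg (CD A α) := ⟨fun z => ⟨-z.re, -z.im⟩⟩
instance : One (CD A α) := ⟨⟨1, 0⟩⟩
instance : Mul (CD A α) :=
  ⟨fun z w => ⟨z.re * w.re + α * (w.im * star z.im), star z.re * w.im + w.re * z.im⟩⟩
instance : Star (CD A α) := ⟨fun z => ⟨star z.re, -z.im⟩⟩

@[simp] theorem zero_re : (0 : CD A α).re = 0 := rfl
@[simp] theorem zero_im : (0 : CD A α).im = 0 := rfl
@[simp] theorem one_re : (1 : CD A α).re = 1 := rfl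
@[simp] theorem one_im : (1 : CD A α).im = 0 := rfl
@[simp] theorem add_re (z w : CD A α) : (z + w).re = z.re + w.re := rfl
@[simp] theorem add_im (z w : CD A α) : (z + w).im = z.im + w.im := rfl
@[simp] theorem neg_re (z : CD A α) : (-z).re = -z.re := rfl
@[simp] theorem neg_im (z : CD A α) : (-z).im = -z.im := rfl
@[simp] theorem mul_re (z w : CD A α) :
    (z * w).re = z.re * w.re + α * (w.im * star z.im) := rfl
@[simp] theorem mul_im (z w : CD A α) :
    (z * w).im = star z.re * w.im + w.re * z.im := rfl
@[simp] theorem star_re (z : CD A α) : (star z).re = star z.re := rfl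
@[simp] theorem star_im (z : CD A α) : (star z).im = -z.im := rfl
@[simp] theorem mk_re (x y : A) : (⟨x, y⟩ : CD A α).re = x := rfl
@[simp] theorem mk_im (x y : A) : (⟨x, y⟩ : CD A α).im = y := rfl

instance : NonAssocRing (CD A α) where
  add_assoc a b c := by ext <;> simp [add_assoc]
  zero_add a := by ext <;> simp
  add_zero a := by ext <;> simp
  add_comm a b := by ext <;> simp [add_comm]
  neg_add_cancel a := by ext <;> simp
  nsmul := nsmulRec
  zsmul := zsmulRec
  left_distrib a b c := by ext <;> simp [mul_add, add_mul] <;> abel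
  right_distrib a b c := by ext <;> simp [mul_add, add_mul, star_add] <;> abel
  zero_mul a := by ext <;> simp
  mul_zero a := by ext <;> simp
  one_mul a := by ext <;> simp
  mul_one a := by ext <;> simp

instance {A : Type*} {α : A} [Finite A] : Finite (CD A α) :=
  Finite.of_injective (fun z : CD A α => (z.re, z.im))
    (fun z w h => by cases z; cases w; simpa using h)

/-- If `α` commutes with every element and `star α = α`, then `(a,b) ↦ (a*, -b)`
makes `(A, α)` a star ring. -/
def starRing (h : ∀ t : A, α * t = t * α) (hs : star α = α) : StarRing (CD A α) where
  star := star
  star_involutive z := by ext <;> simp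
  star_mul z w := by
    ext <;>
      simp [StarMul.star_mul, star_star, StarAddMonoid.star_add, star_neg, hs, h, mul_neg, neg_mul,
        neg_add] <;>
      abel
  star_add z w := by ext <;> simp [StarAddMonoid.star_add, neg_add] <;> abel

/-- An element of the form `(x, 0)` with `x` commuting with everything and `star x = x`
commutes with every element of `(A, α)`. -/
theorem mk_zero_comm {x : A} (hx : ∀ t : A, x * t = t * x) (hsx : star x = x) (z : CD A α) :
    (⟨x, 0⟩ : CD A α) * z = z * ⟨x, 0⟩ := by
  ext <;> simp [hsx, hx]

end CD

section QuatAux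

open Quaternion

variable {K : Type*} [CommRing K] {a b : K}

theorem quat_comm_of (q : ℍ[K, a, b]) (hI : 2 * q.imI = 0) (hJ : 2 * q.imJ = 0)
    (hK : 2 * q.imK = 0) (p : ℍ[K, a, b]) : q * p = p * q := by
  apply QuaternionAlgebra.ext
  · rw [QuaternionAlgebra.re_mul, QuaternionAlgebra.re_mul]; ring
  · rw [QuaternionAlgebra.imI_mul, QuaternionAlgebra.imI_mul]
    linear_combination (-(b * p.imK)) * hJ + (b * p.imJ) * hK
  · rw [QuaternionAlgebra.imJ_mul, QuaternionAlgebra.imJ_mul]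
    linear_combination (a * p.imK) * hI + (-(a * p.imI)) * hK
  · rw [QuaternionAlgebra.imK_mul, QuaternionAlgebra.imK_mul]
    linear_combination p.imJ * hI + (-(p.imI)) * hJ

theorem quat_mem_center (q : ℍ[K, a, b]) (hI : 2 * q.imI = 0) (hJ : 2 * q.imJ = 0)
    (hK : 2 * q.imK = 0) : q ∈ ringCenter (ℍ[K, a, b]) := by
  constructor
  · intro x y
    refine ⟨?_, ?_, ?_⟩ <;> simp [naAssociator, mul_assoc]
  · intro p
    simp [naCommutator, quat_comm_of q hI hJ hK p]

theorem quat_torsion_of_central (ha : IsUnit a) (hb : IsUnit b) (q : ℍ[K, a, b])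
    (hq : q ∈ ringCenter (ℍ[K, a, b])) :
    2 * q.imI = 0 ∧ 2 * q.imJ = 0 ∧ 2 * q.imK = 0 := by
  have hc := hq.2
  have hi : q * (⟨0, 1, 0, 0⟩ : ℍ[K, a, b]) = (⟨0, 1, 0, 0⟩ : ℍ[K, a, b]) * q :=
    sub_eq_zero.mp (hc _)
  have hj : q * (⟨0, 0, 1, 0⟩ : ℍ[K, a, b]) = (⟨0, 0, 1, 0⟩ : ℍ[K, a, b]) * q :=
    sub_eq_zero.mp (hc _)
  have h1 := congrArg QuaternionAlgebra.imK hj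
  have h2 := congrArg QuaternionAlgebra.imK hi
  have h3 := congrArg QuaternionAlgebra.imJ hi
  simp only [QuaternionAlgebra.imK_mul, QuaternionAlgebra.imJ_mul] at h1 h2 h3
  refine ⟨by linear_combination h1, by linear_combination -h2, ?_⟩
  have : a * (2 * q.imK) = a * 0 := by rw [mul_zero]; linear_combination -h3
  exact ha.mul_left_cancel this

theorem ess_step (hess : ∀ x : K, x ≠ 0 → ∃ y : K, y * x ≠ 0 ∧ 2 * (y * x) = 0)
    (c v : K) : ∃ c' : K, 2 * (c' * v) = 0 ∧ (∀ u : K, 2 * (c * u) = 0 → 2 * (c' * u) = 0) ∧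
      (c' = c ∨ c' * v ≠ 0) := by
  by_cases h : 2 * (c * v) = 0
  · exact ⟨c, h, fun u hu => hu, Or.inl rfl⟩
  · obtain ⟨s, hs1, hs2⟩ := hess _ h
    refine ⟨2 * s * c, by linear_combination hs2, fun u hu => by linear_combination (2 * s) * hu,
      Or.inr fun h0 => hs1 ?_⟩
    linear_combination h0

end QuatAux

section QuatAux2

open Quaternion

variable {K : Type*} [CommRing K] {a b : K}

theorem coe_mul_re' (c : K) (r : ℍ[K, a, b]) : ((c : ℍ[K, a, b]) * r).re = c * r.re := by
  rw [QuaternionAlgebra.re_mul, QuaternionAlgebra.re_coe, QuaternionAlgebra.imI_coe,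
    QuaternionAlgebra.imJ_coe, QuaternionAlgebra.imK_coe]; ring

theorem coe_mul_imI' (c : K) (r : ℍ[K, a, b]) : ((c : ℍ[K, a, b]) * r).imI = c * r.imI := by
  rw [QuaternionAlgebra.imI_mul, QuaternionAlgebra.re_coe, QuaternionAlgebra.imI_coe,
    QuaternionAlgebra.imJ_coe, QuaternionAlgebra.imK_coe]; ring

theorem coe_mul_imJ' (c : K) (r : ℍ[K, a, b]) : ((c : ℍ[K, a, b]) * r).imJ = c * r.imJ := by
  rw [QuaternionAlgebra.imJ_mul, QuaternionAlgebra.re_coe, QuaternionAlgebra.imI_coe,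
    QuaternionAlgebra.imJ_coe, QuaternionAlgebra.imK_coe]; ring

theorem coe_mul_imK' (c : K) (r : ℍ[K, a, b]) : ((c : ℍ[K, a, b]) * r).imK = c * r.imK := by
  rw [QuaternionAlgebra.imK_mul, QuaternionAlgebra.re_coe, QuaternionAlgebra.imI_coe,
    QuaternionAlgebra.imJ_coe, QuaternionAlgebra.imK_coe]; ring

end QuatAux2

open Quaternion in
theorem stmt14 {K : Type*} [CommRing K] {a b : K} (ha : IsUnit a) (hb : IsUnit b) :
    ((¬ ∀ p q : ℍ[K, a, b], p * q = q * p) ∧ IsCentrallyEssential (ℍ[K, a, b])) ↔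
      ((∀ x : K, x ≠ 0 → ∃ y : K, y * x ≠ 0 ∧ 2 * (y * x) = 0) ∧
        {x : K | 2 * x = 0} ≠ Set.univ) := by
  constructor
  · rintro ⟨hnc, hce⟩
    have hne : {x : K | 2 * x = 0} ≠ Set.univ := by
      intro hu
      apply hnc
      intro p q
      have h2 : ∀ x : K, 2 * x = 0 := fun x => (Set.eq_univ_iff_forall.mp hu) x
      exact quat_comm_of p (h2 _) (h2 _) (h2 _) q
    refine ⟨?_, hne⟩
    intro x hx
    set r : ℍ[K, a, b] := ⟨0, x, 0, 0⟩ with hrdef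
    have hr : r ≠ 0 := by
      intro h
      exact hx (congrArg QuaternionAlgebra.imI h)
    obtain ⟨z, hz, hzr, hzrc⟩ := hce r hr
    obtain ⟨tzI, tzJ, tzK⟩ := quat_torsion_of_central ha hb z hz
    obtain ⟨tI, tJ, tK⟩ := quat_torsion_of_central ha hb _ hzrc
    have hre : (z * r).re = a * z.imI * x := by
      rw [QuaternionAlgebra.re_mul]; show z.re * 0 + a * z.imI * x + b * z.imJ * 0 + 0 * b * z.imJ * 0
        - a * b * z.imK * 0 = a * z.imI * x; ring
    have himI : (z * r).imI = z.re * x := by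
      rw [QuaternionAlgebra.imI_mul]; show z.re * x + z.imI * 0 + 0 * z.imI * x - b * z.imJ * 0
        + b * z.imK * 0 = z.re * x; ring
    have himJ : (z * r).imJ = -(a * z.imK) * x := by
      rw [QuaternionAlgebra.imJ_mul]; show z.re * 0 + a * z.imI * 0 + z.imJ * 0 + 0 * z.imJ * x
        - a * z.imK * x = -(a * z.imK) * x; ring
    have himK : (z * r).imK = -z.imJ * x := by
      rw [QuaternionAlgebra.imK_mul]; show z.re * 0 + z.imI * 0 + 0 * z.imI * 0 - z.imJ * x
        + z.imK * 0 = -z.imJ * x; ring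
    have hsome : (z * r).re ≠ 0 ∨ (z * r).imI ≠ 0 ∨ (z * r).imJ ≠ 0 ∨ (z * r).imK ≠ 0 := by
      by_contra hall
      push_neg at hall
      exact hzr (QuaternionAlgebra.ext hall.1 hall.2.1 hall.2.2.1 hall.2.2.2)
    rcases hsome with h | h | h | h
    · exact ⟨a * z.imI, by rwa [← hre], by linear_combination (a * x) * tzI⟩
    · exact ⟨z.re, by rwa [← himI], by rw [← himI]; exact tI⟩
    · exact ⟨-(a * z.imK), by rwa [← himJ], by linear_combination (-(a * x)) * tzK⟩
    · exact ⟨-z.imJ, by rwa [← himK], by linear_combination (-x) * tzJ⟩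
  · rintro ⟨hess, hne⟩
    obtain ⟨x, hx⟩ := (Set.ne_univ_iff_exists_notMem _).mp hne
    have hx : 2 * x ≠ 0 := hx
    constructor
    · intro hcomm
      have h := congrArg QuaternionAlgebra.imK
        (hcomm (⟨0, 1, 0, 0⟩ : ℍ[K, a, b]) (⟨0, 0, 1, 0⟩ : ℍ[K, a, b]))
      rw [QuaternionAlgebra.imK_mul, QuaternionAlgebra.imK_mul] at h
      exact hx (by linear_combination x * h)
    · intro r hr
      obtain ⟨c1, t1, p1, d1⟩ := ess_step hess 1 r.imI
      obtain ⟨c2, t2, p2, d2⟩ := ess_step hess c1 r.imJ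
      obtain ⟨c3, t3, p3, d3⟩ := ess_step hess c2 r.imK
      have tI : 2 * (c3 * r.imI) = 0 := p3 _ (p2 _ t1)
      have tJ : 2 * (c3 * r.imJ) = 0 := p3 _ t2
      have n1 : ((c1 : ℍ[K, a, b]) * r) ≠ 0 := by
        rcases d1 with rfl | h
        · rwa [QuaternionAlgebra.coe_one, one_mul]
        · intro h0
          apply h
          have := congrArg QuaternionAlgebra.imI h0
          rwa [coe_mul_imI' c1 r] at this
      have n2 : ((c2 : ℍ[K, a, b]) * r) ≠ 0 := by
        rcases d2 with rfl | h
        · exact n1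
        · intro h0
          apply h
          have := congrArg QuaternionAlgebra.imJ h0
          rwa [coe_mul_imJ' c2 r] at this
      have n3 : ((c3 : ℍ[K, a, b]) * r) ≠ 0 := by
        rcases d3 with rfl | h
        · exact n2
        · intro h0
          apply h
          have := congrArg QuaternionAlgebra.imK h0
          rwa [coe_mul_imK' c3 r] at this
      refine ⟨(c3 : ℍ[K, a, b]), ?_, n3, ?_⟩
      · apply quat_mem_center <;>
          simp [QuaternionAlgebra.imI_coe, QuaternionAlgebra.imJ_coe, QuaternionAlgebra.imK_coe]
      · apply quat_mem_center
        · rwa [coe_mul_imI']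
        · rwa [coe_mul_imJ']
        · rwa [coe_mul_imK']
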